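/- Well-posedness of the hyperbolic delay system: let Ω ⊆ ℝⁿ open, c₀,…,c_n ∈ L(L₂(Ω)), k ∈ L(L₂(Ω)ⁿ) selfadjoint with k ≥ d > 0, h₀,…,h_n > 0, and let A be the skew-selfadjoint block operator ((0, div₀),(grad, 0)) (or ((0,div),(grad₀,0))). Define M₁(z)q = c₀e^{-h₀z}q₀ - Σ_{i=1}^n c_i k^{-1} e^{-h_i z} q_i and M(z)(v,q) = (v + z^{-1}M₁(z)q, k^{-1}q). Then there exist c > 0 and ρ₀ > 0 such that Re⟨(zM(z)+A)x, x⟩ ≥ c‖x‖² for all z with Re z ≥ ρ₀ and x ∈ dom(A); in particular the evolutionary problem associated with (M,A) is well-posed. -/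

import Mathlib

open MeasureTheory

set_option synthInstance.maxHeartbeats 1000000
set_option maxHeartbeats 1000000

local notation "⟪" x ", " y "⟫" => @inner ℂ _ _ x y

/-- `PiLp 2` of complete spaces is complete (its uniformity is the product uniformity). -/
instance piLp_completeSpace {ι : Type*} {β : ι → Type*} [∀ i, UniformSpace (β i)]
    [∀ i, CompleteSpace (β i)] : CompleteSpace (PiLp 2 β) :=
  inferInstance

/-- The operator `M₁(z)(v,q) = c₀ e^{-h₀z} v - Σ_{i=1}^n c_i e^{-h_i z} (k⁻¹q)_i` of the
hyperbolic delay equation, acting on `V × Vⁿ` (abstracting `L₂(Ω) × L₂(Ω)ⁿ`). -/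
noncomputable def delayM1 {V : Type*} [NormedAddCommGroup V] [InnerProductSpace ℂ V]
    (n : ℕ) (c₀ : V →L[ℂ] V) (c : Fin n → V →L[ℂ] V)
    (kinv : (PiLp 2 fun _ : Fin n => V) →L[ℂ] (PiLp 2 fun _ : Fin n => V))
    (h : Fin (n + 1) → ℝ) (z : ℂ)
    (x : WithLp 2 (V × PiLp 2 fun _ : Fin n => V)) : V :=
  Complex.exp (-(h 0 : ℂ) * z) • c₀ (WithLp.equiv 2 _ x).1
    - ∑ i : Fin n, Complex.exp (-(h i.succ : ℂ) * z) •
        (c i) ((kinv (WithLp.equiv 2 _ x).2) i)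

/-- The material law `M(z)(v,q) = (v + z⁻¹ M₁(z)(v,q), k⁻¹q)` of the hyperbolic delay
equation. -/
noncomputable def delayM {V : Type*} [NormedAddCommGroup V] [InnerProductSpace ℂ V]
    (n : ℕ) (c₀ : V →L[ℂ] V) (c : Fin n → V →L[ℂ] V)
    (kinv : (PiLp 2 fun _ : Fin n => V) →L[ℂ] (PiLp 2 fun _ : Fin n => V))
    (h : Fin (n + 1) → ℝ) (z : ℂ)
    (x : WithLp 2 (V × PiLp 2 fun _ : Fin n => V)) :
    WithLp 2 (V × PiLp 2 fun _ : Fin n => V) :=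
  (WithLp.equiv 2 _).symm
    ((WithLp.equiv 2 _ x).1 + z⁻¹ • delayM1 n c₀ c kinv h z x,
      kinv (WithLp.equiv 2 _ x).2)

/-- Well-posedness of the hyperbolic delay system: with `V = L₂(Ω)`,
`c₀,…,c_n ∈ L(L₂(Ω))`, `k` selfadjoint with `k ≥ d > 0` (with bounded inverse `k⁻¹`),
delays `h₀,…,h_n > 0`, and `A` the skew-selfadjoint block operator
`((0,div₀),(grad,0))` (or `((0,div),(grad₀,0))`) on `L₂(Ω) × L₂(Ω)ⁿ`, there are
`c > 0` and `ρ₀ > 0` such that `Re⟨(zM(z)+A)x, x⟩ ≥ c‖x‖²` for all `Re z ≥ ρ₀` and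
`x ∈ dom(A)`; in particular the evolutionary problem associated with `(M,A)` is
well-posed. -/
theorem hyperbolic_delay_wellposed
    {V : Type*} [NormedAddCommGroup V] [InnerProductSpace ℂ V] [CompleteSpace V]
    (n : ℕ) (c₀ : V →L[ℂ] V) (c : Fin n → V →L[ℂ] V)
    (k kinv : (PiLp 2 fun _ : Fin n => V) →L[ℂ] (PiLp 2 fun _ : Fin n => V))
    (d : ℝ) (hd : 0 < d) (hksa : IsSelfAdjoint k)
    (hk : ∀ q : PiLp 2 fun _ : Fin n => V, d * ‖q‖ ^ 2 ≤ (⟪k q, q⟫ : ℂ).re)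
    (hkinv1 : k.comp kinv = ContinuousLinearMap.id ℂ _)
    (hkinv2 : kinv.comp k = ContinuousLinearMap.id ℂ _)
    (h : Fin (n + 1) → ℝ) (hh : ∀ i, 0 < h i)
    (A : WithLp 2 (V × PiLp 2 fun _ : Fin n => V) →ₗ.[ℂ]
      WithLp 2 (V × PiLp 2 fun _ : Fin n => V))
    (hAdense : Dense (A.domain : Set (WithLp 2 (V × PiLp 2 fun _ : Fin n => V))))
    (hskew : A.adjoint = -A) :
    ∃ cc > (0:ℝ), ∃ ρ₀ > (0:ℝ), ∀ z : ℂ, ρ₀ ≤ z.re →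
      ∀ (x : WithLp 2 (V × PiLp 2 fun _ : Fin n => V)) (hx : x ∈ A.domain),
        cc * ‖x‖ ^ 2 ≤ (⟪z • delayM n c₀ c kinv h z x + A ⟨x, hx⟩, x⟫ : ℂ).re := by
  classical
  set C : ℝ := ‖c₀‖ + (∑ i : Fin n, ‖c i‖) * ‖kinv‖ with hCdef
  have hC0 : 0 ≤ C := by positivity
  set m : ℝ := min 1 (d / (‖k‖ + 1) ^ 2) with hmdef
  have hm0 : 0 < m := lt_min one_pos (by positivity)
  have hm1 : m ≤ 1 := min_le_left _ _
  refine ⟨1, one_pos, (1 + C) / m, by positivity, ?_⟩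
  intro z hz x hx
  have hzre : 0 < z.re := lt_of_lt_of_le (by positivity) hz
  have hz0 : z ≠ 0 := fun hzz => by simp [hzz] at hzre
  have hka : ∀ y, k (kinv y) = y := fun y =>
    congrFun (congrArg DFunLike.coe hkinv1) y
  have hadj : ContinuousLinearMap.adjoint k = k := hksa
  set v := x.fst with hv
  set q := x.snd with hq
  set a : PiLp 2 fun _ : Fin n => V := kinv q with ha
  -- component norm bounds
  have hcomp : ∀ (y : PiLp 2 fun _ : Fin n => V) (i : Fin n), ‖y i‖ ≤ ‖y‖ := by
    intro y i
    have h1 := PiLp.norm_sq_eq_of_L2 (fun _ : Fin n => V) y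
    have h2 : ‖y i‖ ^ 2 ≤ ∑ j, ‖y j‖ ^ 2 :=
      Finset.single_le_sum (f := fun j : Fin n => ‖y j‖ ^ 2)
        (fun j _ => sq_nonneg _) (Finset.mem_univ i)
    nlinarith [norm_nonneg y, norm_nonneg (y i)]
  have hxsq : ‖x‖ ^ 2 = ‖v‖ ^ 2 + ‖q‖ ^ 2 := WithLp.prod_norm_sq_eq_of_L2 x
  have hvx : ‖v‖ ≤ ‖x‖ := by nlinarith [norm_nonneg x, norm_nonneg v, norm_nonneg q]
  have hqx : ‖q‖ ≤ ‖x‖ := by nlinarith [norm_nonneg x, norm_nonneg v, norm_nonneg q]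
  -- the skew part contributes zero
  have hA0 : (⟪A ⟨x, hx⟩, x⟫ : ℂ).re = 0 := by
    have key := LinearPMap.adjoint_isFormalAdjoint hAdense
    rw [hskew] at key
    have k2 := key ⟨x, hx⟩ ⟨x, hx⟩
    rw [LinearPMap.neg_apply, inner_neg_left] at k2
    have k6 : -(⟪A ⟨x, hx⟩, x⟫ : ℂ) = (starRingEnd ℂ) (⟪A ⟨x, hx⟩, x⟫ : ℂ) :=
      k2.trans (inner_conj_symm x (A ⟨x, hx⟩)).symm
    have k7 := congrArg Complex.re k6
    simp only [Complex.neg_re, Complex.conj_re] at k7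
    linarith
  -- the inner product ⟪kinv q, q⟫ is real
  have hq_ka : (⟪a, q⟫ : ℂ) = ⟪a, k a⟫ := by rw [ha, hka]
  have h2 : (⟪k a, a⟫ : ℂ) = ⟪a, k a⟫ := by
    conv_lhs => rw [← hadj]
    exact ContinuousLinearMap.adjoint_inner_left k a a
  have him : (⟪a, q⟫ : ℂ).im = 0 := by
    have hcj : (starRingEnd ℂ) (⟪a, q⟫ : ℂ) = ⟪a, q⟫ := by
      rw [hq_ka, inner_conj_symm, h2]
    have := congrArg Complex.im hcj
    simp only [Complex.conj_im] at this
    linarith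
  -- lower bound on its real part
  have hwre : m * ‖q‖ ^ 2 ≤ (⟪a, q⟫ : ℂ).re := by
    have hdk : d * ‖a‖ ^ 2 ≤ (⟪a, q⟫ : ℂ).re := by
      have := hk a
      rw [hq_ka, ← h2]; exact this
    have h2' : k a = q := hka q
    have hqa : ‖q‖ ≤ (‖k‖ + 1) * ‖a‖ :=
      calc ‖q‖ = ‖k a‖ := by rw [h2']
        _ ≤ ‖k‖ * ‖a‖ := k.le_opNorm a
        _ ≤ (‖k‖ + 1) * ‖a‖ := by nlinarith [norm_nonneg a]
    have hmle : m ≤ d / (‖k‖ + 1) ^ 2 := min_le_right _ _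
    have hk1 : (0:ℝ) < (‖k‖ + 1) ^ 2 := by positivity
    rw [le_div_iff₀ hk1] at hmle
    have hq2 : ‖q‖ ^ 2 ≤ ((‖k‖ + 1) * ‖a‖) ^ 2 :=
      pow_le_pow_left₀ (norm_nonneg q) hqa 2
    have t1 : m * ‖q‖ ^ 2 ≤ m * ((‖k‖ + 1) * ‖a‖) ^ 2 :=
      mul_le_mul_of_nonneg_left hq2 hm0.le
    have t2 : m * (‖k‖ + 1) ^ 2 * ‖a‖ ^ 2 ≤ d * ‖a‖ ^ 2 :=
      mul_le_mul_of_nonneg_right hmle (sq_nonneg _)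
    nlinarith [t1, t2, hdk]
  -- bound on the delay operator M₁
  have hexp1 : ∀ r : ℝ, 0 < r → ‖Complex.exp (-(r:ℂ) * z)‖ ≤ 1 := by
    intro r hr
    rw [Complex.norm_exp]
    rw [Real.exp_le_one_iff]
    have : (-(r:ℂ) * z).re = -(r * z.re) := by simp [Complex.mul_re]
    rw [this]
    nlinarith
  set M1 := delayM1 n c₀ c kinv h z x with hM1def
  have hM1 : ‖M1‖ ≤ C * ‖x‖ := by
    rw [hM1def]
    unfold delayM1
    refine (norm_sub_le _ _).trans ?_
    have hb0 : ‖Complex.exp (-(h 0 : ℂ) * z) • c₀ (WithLp.equiv 2 _ x).1‖ ≤ ‖c₀‖ * ‖x‖ := by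
      rw [norm_smul]
      calc ‖Complex.exp (-(h 0 : ℂ) * z)‖ * ‖c₀ (WithLp.equiv 2 _ x).1‖
          ≤ 1 * (‖c₀‖ * ‖x‖) := by
            apply mul_le_mul (hexp1 _ (hh 0)) ?_ (norm_nonneg _) zero_le_one
            calc ‖c₀ (WithLp.equiv 2 _ x).1‖ ≤ ‖c₀‖ * ‖(WithLp.equiv 2 _ x).1‖ :=
                  c₀.le_opNorm _
              _ ≤ ‖c₀‖ * ‖x‖ := by
                  apply mul_le_mul_of_nonneg_left _ (norm_nonneg c₀)
                  exact hvx
        _ = ‖c₀‖ * ‖x‖ := one_mul _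
    have hbi : ∀ i : Fin n,
        ‖Complex.exp (-(h i.succ : ℂ) * z) • (c i) ((kinv (WithLp.equiv 2 _ x).2) i)‖
          ≤ ‖c i‖ * ‖kinv‖ * ‖x‖ := by
      intro i
      rw [norm_smul]
      have h1 : ‖(c i) ((kinv (WithLp.equiv 2 _ x).2) i)‖
          ≤ ‖c i‖ * (‖kinv‖ * ‖x‖) := by
        calc ‖(c i) ((kinv (WithLp.equiv 2 _ x).2) i)‖
            ≤ ‖c i‖ * ‖(kinv (WithLp.equiv 2 _ x).2) i‖ := (c i).le_opNorm _
          _ ≤ ‖c i‖ * (‖kinv‖ * ‖x‖) := by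
              apply mul_le_mul_of_nonneg_left _ (norm_nonneg (c i))
              calc ‖(kinv (WithLp.equiv 2 _ x).2) i‖ ≤ ‖kinv (WithLp.equiv 2 _ x).2‖ :=
                    hcomp _ i
                _ ≤ ‖kinv‖ * ‖(WithLp.equiv 2 _ x).2‖ := kinv.le_opNorm _
                _ ≤ ‖kinv‖ * ‖x‖ := mul_le_mul_of_nonneg_left hqx (norm_nonneg kinv)
      calc ‖Complex.exp (-(h i.succ : ℂ) * z)‖ * ‖(c i) ((kinv (WithLp.equiv 2 _ x).2) i)‖
          ≤ 1 * (‖c i‖ * (‖kinv‖ * ‖x‖)) :=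
            mul_le_mul (hexp1 _ (hh i.succ)) h1 (norm_nonneg _) zero_le_one
        _ = ‖c i‖ * ‖kinv‖ * ‖x‖ := by ring
    calc ‖Complex.exp (-(h 0 : ℂ) * z) • c₀ (WithLp.equiv 2 _ x).1‖
          + ‖∑ i : Fin n, Complex.exp (-(h i.succ : ℂ) * z) •
              (c i) ((kinv (WithLp.equiv 2 _ x).2) i)‖
        ≤ ‖c₀‖ * ‖x‖ + ∑ i : Fin n, ‖c i‖ * ‖kinv‖ * ‖x‖ := by
          refine add_le_add hb0 ?_
          refine (norm_sum_le _ _).trans ?_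
          exact Finset.sum_le_sum fun i _ => hbi i
      _ = C * ‖x‖ := by rw [hCdef, ← Finset.sum_mul, ← Finset.sum_mul]; ring
  have hM1re : -(C * ‖x‖ ^ 2) ≤ (⟪M1, v⟫ : ℂ).re := by
    have h1 : |(⟪M1, v⟫ : ℂ).re| ≤ ‖(⟪M1, v⟫ : ℂ)‖ := Complex.abs_re_le_norm _
    have h2 : ‖(⟪M1, v⟫ : ℂ)‖ ≤ ‖M1‖ * ‖v‖ := norm_inner_le_norm _ _
    have h3 : ‖M1‖ * ‖v‖ ≤ C * ‖x‖ * ‖x‖ :=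
      mul_le_mul hM1 hvx (norm_nonneg _) (by positivity)
    have := neg_abs_le ((⟪M1, v⟫ : ℂ).re)
    nlinarith
  -- expand the inner product
  have hexp : (⟪z • delayM n c₀ c kinv h z x + A ⟨x, hx⟩, x⟫ : ℂ).re
      = z.re * ‖v‖ ^ 2 + (⟪M1, v⟫ : ℂ).re + z.re * (⟪a, q⟫ : ℂ).re := by
    rw [inner_add_left, Complex.add_re, hA0, add_zero, inner_smul_left]
    have hiMx : (⟪delayM n c₀ c kinv h z x, x⟫ : ℂ)
        = (⟪v + z⁻¹ • M1, v⟫ : ℂ) + (⟪a, q⟫ : ℂ) := rfl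
    rw [hiMx, inner_add_left, inner_smul_left]
    have hzz : (starRingEnd ℂ) z * ((starRingEnd ℂ) z⁻¹ * (⟪M1, v⟫ : ℂ))
        = (⟪M1, v⟫ : ℂ) := by
      rw [← mul_assoc, ← map_mul, mul_inv_cancel₀ hz0, map_one, one_mul]
    have hvv : (⟪v, v⟫ : ℂ) = (‖v‖ ^ 2 : ℝ) := by
      rw [inner_self_eq_norm_sq_to_K]; norm_cast
    rw [mul_add, mul_add, hzz, hvv]
    simp only [Complex.add_re, Complex.mul_re, Complex.conj_re, Complex.conj_im,
      Complex.ofReal_re, Complex.ofReal_im, him]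
    ring
  rw [hexp]
  -- final arithmetic
  have hzm : 1 + C ≤ z.re * m := by
    rw [div_le_iff₀ hm0] at hz
    linarith
  have e : z.re * m * ‖x‖ ^ 2 = z.re * m * ‖v‖ ^ 2 + z.re * m * ‖q‖ ^ 2 := by
    rw [hxsq]; ring
  have hterm1 : z.re * m * ‖v‖ ^ 2 ≤ z.re * ‖v‖ ^ 2 := by
    nlinarith [mul_nonneg (mul_nonneg hzre.le (sq_nonneg ‖v‖)) (sub_nonneg.mpr hm1)]
  have hterm2 : z.re * m * ‖q‖ ^ 2 ≤ z.re * (⟪a, q⟫ : ℂ).re := by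
    have := mul_le_mul_of_nonneg_left hwre (le_of_lt hzre)
    linarith [this]
  have hfin : (1 + C) * ‖x‖ ^ 2 ≤ z.re * m * ‖x‖ ^ 2 :=
    mul_le_mul_of_nonneg_right hzm (sq_nonneg _)
  nlinarith [sq_nonneg ‖x‖]
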